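/- For the LOS Z3RO precoder with M antennas and M_s saturated antennas (0 < M_s < M/2), normalized to unit power, the achieved array gain equals M · (ζ^{2/3} - (1-ζ)^{2/3})^2 / (ζ^{1/3} + (1-ζ)^{1/3}) times β, where ζ = M_s/M. That is, with g_m = α for the M - M_s unsaturated antennas and g_m = -α((M-M_s)/M_s)^{1/3} for the M_s saturated antennas and α chosen so that ∑ g_m^2 = 1, one has (∑_m √β g_m)^2 = βM(ζ^{2/3}-(1-ζ)^{2/3})^2/(ζ^{1/3}+(1-ζ)^{1/3}). -/

import Mathlib

theorem los_z3ro_array_gain (M Ms : ℕ) (β α : ℝ) (hβ : 0 < β) (hα : 0 < α)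
    (𝓜 : Finset (Fin M)) (hcard : 𝓜.card = Ms) (hMs : 0 < Ms)
    (hMsM : (Ms : ℝ) < M / 2)
    (g : Fin M → ℝ)
    (hg : ∀ m, g m = if m ∈ 𝓜 then -α * ((M - Ms : ℝ) / Ms) ^ ((1 : ℝ) / 3) else α)
    (hnorm : ∑ m, g m ^ 2 = 1) :
    (∑ m, Real.sqrt β * g m) ^ 2 =
      β * M * (((Ms : ℝ) / M) ^ ((2 : ℝ) / 3) - (1 - (Ms : ℝ) / M) ^ ((2 : ℝ) / 3)) ^ 2 /
        (((Ms : ℝ) / M) ^ ((1 : ℝ) / 3) + (1 - (Ms : ℝ) / M) ^ ((1 : ℝ) / 3)) := by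
  have hMspos : (0:ℝ) < Ms := by exact_mod_cast hMs
  have hMpos : (0:ℝ) < M := by linarith
  have hMsM' : (Ms:ℝ) < M := by linarith
  have hMsle : Ms ≤ M := le_of_lt (by exact_mod_cast hMsM')
  have hζpos : (0:ℝ) < (Ms:ℝ)/M := div_pos hMspos hMpos
  have hζlt : (Ms:ℝ)/M < 1 := (div_lt_one hMpos).mpr hMsM'
  set a : ℝ := ((Ms : ℝ) / M) ^ ((1 : ℝ) / 3) with ha_def
  set b : ℝ := (1 - (Ms : ℝ) / M) ^ ((1 : ℝ) / 3) with hb_def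
  have ha : 0 < a := Real.rpow_pos_of_pos hζpos _
  have hb : 0 < b := Real.rpow_pos_of_pos (by linarith) _
  have ha3 : a ^ 3 = (Ms:ℝ)/M := by
    rw [ha_def, ← Real.rpow_natCast (((Ms : ℝ) / M) ^ ((1 : ℝ) / 3)) 3,
      ← Real.rpow_mul hζpos.le]
    norm_num
  have hb3 : b ^ 3 = 1 - (Ms:ℝ)/M := by
    rw [hb_def, ← Real.rpow_natCast ((1 - (Ms : ℝ) / M) ^ ((1 : ℝ) / 3)) 3,
      ← Real.rpow_mul (by linarith : (0:ℝ) ≤ 1 - (Ms:ℝ)/M)]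
    norm_num
  have hMs_eq : (Ms:ℝ) = M * a ^ 3 := by rw [ha3]; field_simp
  have hMc_eq : (M:ℝ) - Ms = M * b ^ 3 := by rw [hb3]; field_simp
  have hKeq : ((M - Ms : ℝ) / Ms) = (b/a)^3 := by
    rw [div_pow, ha3, hb3]
    field_simp
  have hK : ((M - Ms : ℝ) / Ms) ^ ((1 : ℝ) / 3) = b / a := by
    rw [hKeq, ← Real.rpow_natCast (b/a) 3, ← Real.rpow_mul (div_pos hb ha).le]
    norm_num
  have hcardc : 𝓜ᶜ.card = M - Ms := by
    rw [Finset.card_compl, hcard, Fintype.card_fin]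
  have hsum : ∑ m, g m = ((M:ℝ) - Ms) * α - (Ms:ℝ) * α * (b/a) := by
    rw [← Finset.sum_add_sum_compl 𝓜]
    have h1 : ∑ m ∈ 𝓜, g m = (Ms:ℝ) * (-α * (b/a)) := by
      rw [Finset.sum_congr rfl (fun m hm => by rw [hg m, if_pos hm, hK]),
        Finset.sum_const, hcard, nsmul_eq_mul]
    have h2 : ∑ m ∈ 𝓜ᶜ, g m = ((M:ℝ) - Ms) * α := by
      rw [Finset.sum_congr rfl (fun m hm => by
        rw [hg m, if_neg (Finset.mem_compl.mp hm)]),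
        Finset.sum_const, hcardc, nsmul_eq_mul, Nat.cast_sub hMsle]
    rw [h1, h2]; ring
  have hnorm' : (Ms:ℝ) * (α^2 * (b/a)^2) + ((M:ℝ) - Ms) * α^2 = 1 := by
    rw [← hnorm, ← Finset.sum_add_sum_compl 𝓜]
    have h1 : ∑ m ∈ 𝓜, g m ^ 2 = (Ms:ℝ) * (α^2 * (b/a)^2) := by
      rw [Finset.sum_congr rfl (fun m hm => by rw [hg m, if_pos hm, hK]),
        Finset.sum_const, hcard, nsmul_eq_mul]
      ring
    have h2 : ∑ m ∈ 𝓜ᶜ, g m ^ 2 = ((M:ℝ) - Ms) * α^2 := by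
      rw [Finset.sum_congr rfl (fun m hm => by
        rw [hg m, if_neg (Finset.mem_compl.mp hm)]),
        Finset.sum_const, hcardc, nsmul_eq_mul, Nat.cast_sub hMsle]
    rw [h1, h2]
  have hS : ∑ m, g m = M * α * b * (b^2 - a^2) := by
    rw [hsum, hMc_eq, hMs_eq]
    field_simp
  have hQ : M * α^2 * b^2 * (a + b) = 1 := by
    rw [hMc_eq, hMs_eq] at hnorm'
    have e1 : (M:ℝ) * a^3 * (α^2 * (b/a)^2) = M * a * b^2 * α^2 := by
      field_simp
    rw [e1] at hnorm'
    linear_combination hnorm'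
  have ha2 : ((Ms : ℝ) / M) ^ ((2 : ℝ) / 3) = a ^ 2 := by
    rw [show (2:ℝ)/3 = (1/3) * (2:ℕ) by norm_num, Real.rpow_mul hζpos.le,
      Real.rpow_natCast, ha_def]
  have hb2 : (1 - (Ms : ℝ) / M) ^ ((2 : ℝ) / 3) = b ^ 2 := by
    rw [show (2:ℝ)/3 = (1/3) * (2:ℕ) by norm_num,
      Real.rpow_mul (by linarith : (0:ℝ) ≤ 1 - (Ms:ℝ)/M),
      Real.rpow_natCast, hb_def]
  rw [← Finset.mul_sum, mul_pow, Real.sq_sqrt hβ.le, hS, ha2, hb2]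
  rw [eq_div_iff (by positivity : a + b ≠ 0)]
  linear_combination β * (M:ℝ) * (a^2 - b^2)^2 * hQ
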